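/- Let x_1, ..., x_{m+1} be sampled i.i.d. from a distribution D over R^d. Then the sum over j from 1 to m+1 of the probability that x_j is not in the linear span of x_1,...,x_{j-1} is at most d. -/

import Mathlib

open MeasureTheory Metric
open scoped ENNReal

/-- The event that `x j` escapes the span of the earlier coordinates is measurable. -/
lemma measurable_span_event (d n : ℕ) (j : Fin n) :
    MeasurableSet {x : Fin n → Fin d → ℝ |
      x j ∉ Submodule.span ℝ (x '' {i : Fin n | i < j})} := by
  classical
  set ι := {i : Fin n // i < j} with hι
  have hP : ∀ x : Fin n → Fin d → ℝ, ∀ c : ι → ℝ,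
      (∑ i : ι, c i • x i.1) ∈ Submodule.span ℝ (x '' {i : Fin n | i < j}) := by
    intro x c
    refine Submodule.sum_mem _ fun i _ => Submodule.smul_mem _ _ ?_
    exact Submodule.subset_span ⟨i.1, i.2, rfl⟩
  have hmemiff : ∀ x : Fin n → Fin d → ℝ,
      x j ∈ Submodule.span ℝ (x '' {i : Fin n | i < j}) ↔
        ∃ c : ι → ℝ, ∑ i : ι, c i • x i.1 = x j := by
    intro x
    rw [Set.image_eq_range x {i : Fin n | i < j}]
    exact Submodule.mem_span_range_iff_exists_fun ℝ
  set g : (Fin n → Fin d → ℝ) → ℝ :=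
    fun x => ⨅ c : ι → ℚ, dist (x j) (∑ i : ι, (c i : ℝ) • x i.1) with hg
  have hbdd : ∀ x : Fin n → Fin d → ℝ,
      BddBelow (Set.range fun c : ι → ℚ => dist (x j) (∑ i : ι, (c i : ℝ) • x i.1)) :=
    fun x => ⟨0, by rintro r ⟨c, rfl⟩; exact dist_nonneg⟩
  have key : ∀ x : Fin n → Fin d → ℝ,
      x j ∈ Submodule.span ℝ (x '' {i : Fin n | i < j}) ↔ g x = 0 := by
    intro x
    constructor
    · intro hx
      obtain ⟨c, hc⟩ := (hmemiff x).1 hx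
      refine le_antisymm ?_ (le_ciInf fun c' => dist_nonneg)
      refine le_of_forall_pos_le_add ?_
      intro ε hε
      have hcont : Continuous fun c : ι → ℝ => ∑ i : ι, c i • x i.1 := by
        exact continuous_finset_sum _ fun i _ => (continuous_apply i).smul continuous_const
      obtain ⟨δ, hδ, hδ'⟩ := Metric.continuousAt_iff.mp hcont.continuousAt (ε := ε) hε
      choose c' hc' using fun i : ι => exists_rat_near (c i) hδ
      have hdist : dist (fun i => (c' i : ℝ)) c < δ := by
        rcases isEmpty_or_nonempty ι with h | h
        · simpa [dist_pi_def] using hδ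
        · rw [dist_pi_lt_iff hδ]
          intro i
          rw [Real.dist_eq, abs_sub_comm]
          exact hc' i
      have := hδ' hdist
      rw [dist_eq_norm] at this
      calc g x ≤ dist (x j) (∑ i : ι, (c' i : ℝ) • x i.1) := ciInf_le (hbdd x) c'
        _ ≤ ε := by
            rw [dist_eq_norm, ← hc]
            rw [show (∑ i : ι, (c i : ℝ) • x i.1) - ∑ i : ι, (c' i : ℝ) • x i.1
              = -((∑ i : ι, ((c' i : ℝ)) • x i.1) - ∑ i : ι, c i • x i.1) by ring]
            rw [norm_neg]
            exact this.le
        _ = 0 + ε := by ring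
    · intro hx
      by_contra hmem
      set K := Submodule.span ℝ (x '' {i : Fin n | i < j}) with hK
      have hclosed : IsClosed (K : Set (Fin d → ℝ)) := Submodule.closed_of_finiteDimensional K
      have hpos : 0 < infDist (x j) (K : Set (Fin d → ℝ)) :=
        (hclosed.notMem_iff_infDist_pos ⟨0, K.zero_mem⟩).1 hmem
      have hge : infDist (x j) (K : Set (Fin d → ℝ)) ≤ g x := by
        refine le_ciInf fun c => infDist_le_dist_of_mem ?_
        exact hP x _
      rw [hx] at hge
      exact absurd hge (not_le.2 hpos)
  have hmeas : Measurable g := by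
    refine Measurable.iInf fun c => ?_
    have : Continuous fun x : Fin n → Fin d → ℝ =>
        dist (x j) (∑ i : ι, (c i : ℝ) • x i.1) := by
      refine Continuous.dist (continuous_apply j) ?_
      exact continuous_finset_sum _ fun i _ => ((continuous_apply i.1).const_smul (c i : ℝ))
    exact this.measurable
  have : {x : Fin n → Fin d → ℝ |
      x j ∉ Submodule.span ℝ (x '' {i : Fin n | i < j})} = (g ⁻¹' {0})ᶜ := by
    ext x
    simp [key x, Set.mem_preimage]
  rw [this]
  exact (hmeas (measurableSet_singleton 0)).compl

/-- Pointwise: the set of indices whose coordinate escapes the span of earlier ones has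
cardinality at most `d`. -/
lemma card_escape_le (d m : ℕ) (x : Fin (m + 1) → Fin d → ℝ) (S : Finset (Fin (m + 1)))
    (hS : ∀ j ∈ S, x j ∉ Submodule.span ℝ (x '' {i : Fin (m + 1) | i < j})) :
    S.card ≤ d := by
  classical
  set f : ℕ → ℕ :=
    fun k => Module.finrank ℝ (Submodule.span ℝ (x '' {i : Fin (m + 1) | (i : ℕ) < k})) with hf
  have hmono : Monotone f := by
    intro a b hab
    exact Submodule.finrank_mono (Submodule.span_mono
      (Set.image_mono fun i hi => lt_of_lt_of_le hi hab))
  have hstep : ∀ j ∈ S, f j < f (j + 1) := by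
    intro j hj
    have hset : {i : Fin (m + 1) | i < j} = {i : Fin (m + 1) | (i : ℕ) < (j : ℕ)} := by
      rfl
    have hle : Submodule.span ℝ (x '' {i : Fin (m + 1) | (i : ℕ) < (j : ℕ)}) ≤
        Submodule.span ℝ (x '' {i : Fin (m + 1) | (i : ℕ) < (j : ℕ) + 1}) :=
      Submodule.span_mono (Set.image_mono fun i hi => Nat.lt_succ_of_lt hi)
    have hmem : x j ∈ Submodule.span ℝ (x '' {i : Fin (m + 1) | (i : ℕ) < (j : ℕ) + 1}) :=
      Submodule.subset_span ⟨j, Nat.lt_succ_self _, rfl⟩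
    have hnmem := hS j hj
    rw [hset] at hnmem
    have hlt : Submodule.span ℝ (x '' {i : Fin (m + 1) | (i : ℕ) < (j : ℕ)}) <
        Submodule.span ℝ (x '' {i : Fin (m + 1) | (i : ℕ) < (j : ℕ) + 1}) :=
      lt_of_le_of_ne hle (fun h => hnmem (h ▸ hmem))
    exact Submodule.finrank_lt_finrank_of_lt hlt
  have h1 : S.card ≤ ∑ j : Fin (m + 1), (f ((j : ℕ) + 1) - f (j : ℕ)) := by
    calc S.card = ∑ _j ∈ S, 1 := by simp
      _ ≤ ∑ j ∈ S, (f ((j : ℕ) + 1) - f (j : ℕ)) := by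
          refine Finset.sum_le_sum fun j hj => ?_
          have := hstep j hj
          omega
      _ ≤ ∑ j : Fin (m + 1), (f ((j : ℕ) + 1) - f (j : ℕ)) :=
          Finset.sum_le_sum_of_subset (Finset.subset_univ S)
  have h2 : ∑ j : Fin (m + 1), (f ((j : ℕ) + 1) - f (j : ℕ)) = f (m + 1) - f 0 := by
    rw [Fin.sum_univ_eq_sum_range (fun k => f (k + 1) - f k)]
    exact Finset.sum_range_tsub hmono (m + 1)
  have h3 : f (m + 1) ≤ d := by
    calc f (m + 1) ≤ Module.finrank ℝ (Fin d → ℝ) := Submodule.finrank_le _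
      _ = d := Module.finrank_fin_fun ℝ
  omega

theorem sum_prob_not_in_span_le_dim (d m : ℕ) (D : Measure (Fin d → ℝ))
    [IsProbabilityMeasure D] :
    ∑ j : Fin (m + 1),
      (Measure.pi fun _ : Fin (m + 1) => D)
        {x : Fin (m + 1) → Fin d → ℝ |
          x j ∉ Submodule.span ℝ (x '' {i : Fin (m + 1) | i < j})} ≤ (d : ℝ≥0∞) := by
  classical
  set μ := Measure.pi fun _ : Fin (m + 1) => D with hμ
  set A : Fin (m + 1) → Set (Fin (m + 1) → Fin d → ℝ) :=
    fun j => {x | x j ∉ Submodule.span ℝ (x '' {i : Fin (m + 1) | i < j})} with hA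
  have hAm : ∀ j, MeasurableSet (A j) := fun j => measurable_span_event d (m + 1) j
  have hpt : ∀ x, (∑ j : Fin (m + 1), (A j).indicator (fun _ => (1 : ℝ≥0∞)) x) ≤ (d : ℝ≥0∞) := by
    intro x
    have hcard : (Finset.univ.filter fun j => x ∈ A j).card ≤ d := by
      refine card_escape_le d m x _ fun j hj => ?_
      exact (Finset.mem_filter.mp hj).2
    calc (∑ j : Fin (m + 1), (A j).indicator (fun _ => (1 : ℝ≥0∞)) x)
        = ((Finset.univ.filter fun j => x ∈ A j).card : ℝ≥0∞) := by
          rw [Finset.card_filter]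
          push_cast
          simp [Set.indicator_apply]
      _ ≤ (d : ℝ≥0∞) := by exact_mod_cast Nat.cast_le.mpr hcard
  calc ∑ j : Fin (m + 1), μ (A j)
      = ∑ j : Fin (m + 1), ∫⁻ x, (A j).indicator (fun _ => (1 : ℝ≥0∞)) x ∂μ := by
        refine Finset.sum_congr rfl fun j _ => ?_
        exact (lintegral_indicator_one (hAm j)).symm
    _ = ∫⁻ x, ∑ j : Fin (m + 1), (A j).indicator (fun _ => (1 : ℝ≥0∞)) x ∂μ :=
        (lintegral_finset_sum _ fun j _ => (measurable_one.indicator (hAm j))).symm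
    _ ≤ ∫⁻ _x, (d : ℝ≥0∞) ∂μ := lintegral_mono hpt
    _ = (d : ℝ≥0∞) := by simp
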